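/- Let a < b be real numbers and let S be the strip {z ∈ ℂ : a < Re z < b}. Suppose H : S × ℝⁿ → ℂ is such that z ↦ H(z,x) is analytic on S for each x, x ↦ H(z,x) is measurable for each z, and there is a measurable function H⋆ : ℝⁿ → [0,∞) with |H(z,x)| + |∂H/∂z (z,x)| ≤ H⋆(x) for all z in S and x in ℝⁿ. Let f : ℝⁿ → ℂ be a measurable function such that ∫_{ℝⁿ} max(|f(x)|^a, |f(x)|^b) (1 + |log |f(x)||) H⋆(x) dx < ∞ (interpreting the integrand as 0 where f(x) = 0). Then the function G(z) = ∫_{ℝⁿ} |f(x)|^z e^{i Arg f(x)} H(z,x) dx is analytic on the strip a < Re z < b. -/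

import Mathlib

open MeasureTheory Real
open scoped ENNReal

private lemma rpow_le_max_rpow {t a b c : ℝ} (ht : 0 < t) (hac : a ≤ c) (hcb : c ≤ b) :
    t ^ c ≤ max (t ^ a) (t ^ b) := by
  rcases le_total 1 t with h | h
  · exact le_max_of_le_right (Real.rpow_le_rpow_of_exponent_le h hcb)
  · exact le_max_of_le_left (Real.rpow_le_rpow_of_exponent_ge ht h hac)

private lemma measurable_deriv_param {α : Type*} [MeasurableSpace α]
    (H : ℂ → α → ℂ) (z₀ : ℂ) (hmeas : ∀ z, Measurable (fun x => H z x))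
    (hdiff : ∀ x, DifferentiableAt ℂ (fun w => H w x) z₀) :
    Measurable (fun x => deriv (fun w => H w x) z₀) := by
  have hu : Filter.Tendsto (fun n : ℕ => z₀ + (((1 : ℝ) / (n + 1) : ℝ) : ℂ))
      Filter.atTop (nhdsWithin z₀ {z₀}ᶜ) := by
    apply tendsto_nhdsWithin_of_tendsto_nhds_of_eventually_within
    · have h0 : Filter.Tendsto (fun n : ℕ => (((1 : ℝ) / (n + 1) : ℝ) : ℂ))
          Filter.atTop (nhds 0) := by
        have h1 := (Complex.continuous_ofReal.tendsto 0).comp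
          tendsto_one_div_add_atTop_nhds_zero_nat
        rw [Complex.ofReal_zero] at h1
        exact h1
      have := h0.const_add z₀
      simpa using this
    · refine Filter.Eventually.of_forall fun n => ?_
      simp only [Set.mem_compl_iff, Set.mem_singleton_iff]
      intro h
      have : (((1 : ℝ) / (n + 1) : ℝ) : ℂ) = 0 := by
        have := congrArg (fun w => w - z₀) h
        simpa using this
      rw [Complex.ofReal_eq_zero] at this
      have : (0:ℝ) < 1 / (n + 1) := by positivity
      simp_all
  have key : ∀ x, Filter.Tendsto
      (fun n : ℕ => ((((1 : ℝ) / (n + 1) : ℝ) : ℂ))⁻¹ •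
        (H (z₀ + (((1 : ℝ) / (n + 1) : ℝ) : ℂ)) x - H z₀ x))
      Filter.atTop (nhds (deriv (fun w => H w x) z₀)) := by
    intro x
    have hs := hasDerivAt_iff_tendsto_slope.1 (hdiff x).hasDerivAt
    have := hs.comp hu
    refine this.congr fun n => ?_
    simp [slope, Function.comp, vsub_eq_sub]
  exact measurable_of_tendsto_metrizable
    (f := fun (n : ℕ) x => ((((1 : ℝ) / (n + 1) : ℝ) : ℂ))⁻¹ •
      (H (z₀ + (((1 : ℝ) / (n + 1) : ℝ) : ℂ)) x - H z₀ x))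
    (fun n => ((measurable_const (a := ((((1 : ℝ) / (n + 1) : ℝ) : ℂ))⁻¹)).smul
      ((hmeas (z₀ + (((1 : ℝ) / (n + 1) : ℝ) : ℂ))).sub (hmeas z₀))))
    (tendsto_pi_nhds.2 key)

/-- Analyticity of `G(z) = ∫ |f(x)|^z e^{i Arg f(x)} H(z,x) dx` on a vertical strip,
under a uniform domination of `H` and its `z`-derivative and a logarithmic
integrability condition on `f`. -/
theorem analytic_integral_on_strip (n : ℕ) (a b : ℝ) (hab : a < b)
    (H : ℂ → EuclideanSpace ℝ (Fin n) → ℂ) (Hstar : EuclideanSpace ℝ (Fin n) → ℝ)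
    (hHstar_meas : Measurable Hstar) (hHstar_nonneg : ∀ x, 0 ≤ Hstar x)
    (hHanalytic : ∀ x, DifferentiableOn ℂ (fun z => H z x) {z : ℂ | a < z.re ∧ z.re < b})
    (hHmeas : ∀ z : ℂ, Measurable (fun x => H z x))
    (hHbound : ∀ z : ℂ, a < z.re → z.re < b → ∀ x,
      ‖H z x‖ + ‖deriv (fun w => H w x) z‖ ≤ Hstar x)
    (f : EuclideanSpace ℝ (Fin n) → ℂ) (hf : Measurable f)
    (hint : Integrable (fun x =>
      (if f x = 0 then 0 else
        max (‖f x‖ ^ a) (‖f x‖ ^ b) *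
          (1 + |Real.log (‖f x‖)|)) * Hstar x) volume) :
    DifferentiableOn ℂ
      (fun z => ∫ x, (if f x = 0 then 0 else
        Complex.exp (z * Real.log (‖f x‖) +
          Complex.I * Complex.arg (f x))) * H z x)
      {z : ℂ | a < z.re ∧ z.re < b} := by
  have hS : IsOpen {z : ℂ | a < z.re ∧ z.re < b} :=
    IsOpen.preimage Complex.continuous_re (isOpen_Ioo (a := a) (b := b))
  have hfmeas0 : MeasurableSet {x | f x = 0} := hf (measurableSet_singleton 0)
  have hφmeas : ∀ z : ℂ, Measurable (fun x =>
      (if f x = 0 then (0:ℂ) else Complex.exp (z * Real.log (‖f x‖) +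
        Complex.I * Complex.arg (f x)))) := by
    intro z
    refine Measurable.ite hfmeas0 measurable_const ?_
    exact Complex.measurable_exp.comp
      ((measurable_const.mul (Complex.measurable_ofReal.comp
        (Real.measurable_log.comp (continuous_norm.measurable.comp hf)))).add
       (measurable_const.mul (Complex.measurable_ofReal.comp
        (Complex.measurable_arg.comp hf))))
  have hφnorm : ∀ z : ℂ, ∀ x, f x ≠ 0 →
      ‖Complex.exp (z * Real.log (‖f x‖) +
        Complex.I * Complex.arg (f x))‖ = ‖f x‖ ^ z.re := by
    intro z x hx
    have ht : 0 < ‖f x‖ := norm_pos_iff.mpr hx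
    rw [Complex.norm_exp, Real.rpow_def_of_pos ht]
    congr 1
    simp [Complex.add_re, Complex.mul_re, Complex.ofReal_re, Complex.ofReal_im,
      Complex.I_re, Complex.I_im, mul_comm]
  have hFbound : ∀ z : ℂ, a < z.re → z.re < b → ∀ x,
      ‖(Real.log (‖f x‖) : ℂ) *
          ((if f x = 0 then (0:ℂ) else Complex.exp (z * Real.log (‖f x‖) +
            Complex.I * Complex.arg (f x))) * H z x) +
        (if f x = 0 then (0:ℂ) else Complex.exp (z * Real.log (‖f x‖) +
            Complex.I * Complex.arg (f x))) * deriv (fun w => H w x) z‖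
      ≤ (if f x = 0 then 0 else
          max (‖f x‖ ^ a) (‖f x‖ ^ b) *
            (1 + |Real.log (‖f x‖)|)) * Hstar x := by
    intro z hza hzb x
    by_cases hx : f x = 0
    · simp [hx]
    · simp only [if_neg hx]
      have ht : 0 < ‖f x‖ := norm_pos_iff.mpr hx
      have hφ := hφnorm z x hx
      have htr : ‖f x‖ ^ z.re
          ≤ max (‖f x‖ ^ a) (‖f x‖ ^ b) :=
        rpow_le_max_rpow ht hza.le hzb.le
      have hH := hHbound z hza hzb x
      have hA : (0:ℝ) ≤ ‖H z x‖ := norm_nonneg _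
      have hB : (0:ℝ) ≤ ‖deriv (fun w => H w x) z‖ := norm_nonneg _
      have hL : (0:ℝ) ≤ |Real.log (‖f x‖)| := abs_nonneg _
      have hM : (0:ℝ) ≤ max (‖f x‖ ^ a) (‖f x‖ ^ b) :=
        (Real.rpow_nonneg ht.le a).trans (le_max_left _ _)
      have h1 : ‖(Real.log (‖f x‖) : ℂ) *
            (Complex.exp (z * Real.log (‖f x‖) +
              Complex.I * Complex.arg (f x)) * H z x) +
          Complex.exp (z * Real.log (‖f x‖) +
              Complex.I * Complex.arg (f x)) * deriv (fun w => H w x) z‖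
          ≤ |Real.log (‖f x‖)| *
              (‖f x‖ ^ z.re * ‖H z x‖) +
            ‖f x‖ ^ z.re * ‖deriv (fun w => H w x) z‖ := by
        refine (norm_add_le _ _).trans ?_
        rw [norm_mul, norm_mul, norm_mul, Complex.norm_real, Real.norm_eq_abs, hφ]
      refine h1.trans ?_
      have h2 : |Real.log (‖f x‖)| *
            (‖f x‖ ^ z.re * ‖H z x‖) +
          ‖f x‖ ^ z.re * ‖deriv (fun w => H w x) z‖
          = ‖f x‖ ^ z.re *
            (|Real.log (‖f x‖)| * ‖H z x‖ +
              ‖deriv (fun w => H w x) z‖) := by ring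
      rw [h2]
      have h3 : |Real.log (‖f x‖)| * ‖H z x‖ +
          ‖deriv (fun w => H w x) z‖
          ≤ (1 + |Real.log (‖f x‖)|) * Hstar x := by nlinarith
      calc ‖f x‖ ^ z.re *
            (|Real.log (‖f x‖)| * ‖H z x‖ +
              ‖deriv (fun w => H w x) z‖)
          ≤ max (‖f x‖ ^ a) (‖f x‖ ^ b) *
            ((1 + |Real.log (‖f x‖)|) * Hstar x) := by
            apply mul_le_mul htr h3 (by positivity) hM
        _ = max (‖f x‖ ^ a) (‖f x‖ ^ b) *
            (1 + |Real.log (‖f x‖)|) * Hstar x := by ring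
  intro z₀ hz₀
  obtain ⟨ha₀, hb₀⟩ := hz₀
  set ε := min (z₀.re - a) (b - z₀.re) with hε
  have εpos : 0 < ε := lt_min (by linarith) (by linarith)
  have hball : ∀ z ∈ Metric.ball z₀ ε, a < z.re ∧ z.re < b := by
    intro z hz
    rw [Metric.mem_ball, Complex.dist_eq] at hz
    have h1 : |(z - z₀).re| ≤ ‖z - z₀‖ := Complex.abs_re_le_norm _
    rw [Complex.sub_re] at h1
    have h2 := abs_lt.1 (h1.trans_lt hz)
    have hεa : ε ≤ z₀.re - a := min_le_left _ _
    have hεb : ε ≤ b - z₀.re := min_le_right _ _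
    exact ⟨by linarith [h2.1], by linarith [h2.2]⟩
  have hderivmeas : Measurable (fun x => deriv (fun w => H w x) z₀) :=
    measurable_deriv_param H z₀ hHmeas
      (fun x => (hHanalytic x).differentiableAt (hS.mem_nhds ⟨ha₀, hb₀⟩))
  have hF'meas : Measurable (fun x =>
      (Real.log (‖f x‖) : ℂ) *
          ((if f x = 0 then (0:ℂ) else Complex.exp (z₀ * Real.log (‖f x‖) +
            Complex.I * Complex.arg (f x))) * H z₀ x) +
        (if f x = 0 then (0:ℂ) else Complex.exp (z₀ * Real.log (‖f x‖) +
            Complex.I * Complex.arg (f x))) * deriv (fun w => H w x) z₀) := by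
    refine Measurable.add ?_ ((hφmeas z₀).mul hderivmeas)
    exact (Complex.measurable_ofReal.comp
      (Real.measurable_log.comp (continuous_norm.measurable.comp hf))).mul
      ((hφmeas z₀).mul (hHmeas z₀))
  have hFint : Integrable (fun x =>
      (if f x = 0 then (0:ℂ) else Complex.exp (z₀ * Real.log (‖f x‖) +
        Complex.I * Complex.arg (f x))) * H z₀ x) volume := by
    refine hint.mono' (((hφmeas z₀).mul (hHmeas z₀)).aestronglyMeasurable) ?_
    refine Filter.Eventually.of_forall fun x => ?_
    by_cases hx : f x = 0
    · simp [hx, hHstar_nonneg x]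
    · rw [norm_mul, if_neg hx, hφnorm z₀ x hx]
      have ht : 0 < ‖f x‖ := norm_pos_iff.mpr hx
      have htr : ‖f x‖ ^ z₀.re
          ≤ max (‖f x‖ ^ a) (‖f x‖ ^ b) :=
        rpow_le_max_rpow ht ha₀.le hb₀.le
      have hH := hHbound z₀ ha₀ hb₀ x
      have hA : (0:ℝ) ≤ ‖H z₀ x‖ := norm_nonneg _
      have hB : (0:ℝ) ≤ ‖deriv (fun w => H w x) z₀‖ := norm_nonneg _
      have hL : (0:ℝ) ≤ |Real.log (‖f x‖)| := abs_nonneg _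
      have hM : (0:ℝ) ≤ max (‖f x‖ ^ a) (‖f x‖ ^ b) :=
        (Real.rpow_nonneg ht.le a).trans (le_max_left _ _)
      have hHs := hHstar_nonneg x
      calc ‖f x‖ ^ z₀.re * ‖H z₀ x‖
          ≤ max (‖f x‖ ^ a) (‖f x‖ ^ b) *
            ((1 + |Real.log (‖f x‖)|) * Hstar x) := by
            apply mul_le_mul htr (by nlinarith) hA hM
        _ = max (‖f x‖ ^ a) (‖f x‖ ^ b) *
            (1 + |Real.log (‖f x‖)|) * Hstar x := by ring
        _ = (if f x = 0 then 0 else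
            max (‖f x‖ ^ a) (‖f x‖ ^ b) *
              (1 + |Real.log (‖f x‖)|)) * Hstar x := by rw [if_neg hx]
  have hderiv : ∀ x, ∀ z ∈ Metric.ball z₀ ε, HasDerivAt
      (fun w => (if f x = 0 then (0:ℂ) else Complex.exp (w * Real.log (‖f x‖) +
        Complex.I * Complex.arg (f x))) * H w x)
      ((Real.log (‖f x‖) : ℂ) *
          ((if f x = 0 then (0:ℂ) else Complex.exp (z * Real.log (‖f x‖) +
            Complex.I * Complex.arg (f x))) * H z x) +
        (if f x = 0 then (0:ℂ) else Complex.exp (z * Real.log (‖f x‖) +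
            Complex.I * Complex.arg (f x))) * deriv (fun w => H w x) z) z := by
    intro x z hz
    obtain ⟨hza, hzb⟩ := hball z hz
    by_cases hx : f x = 0
    · simpa [hx] using hasDerivAt_const z (0:ℂ)
    · simp only [if_neg hx]
      have hHd : HasDerivAt (fun w => H w x) (deriv (fun w => H w x) z) z :=
        ((hHanalytic x).differentiableAt (hS.mem_nhds ⟨hza, hzb⟩)).hasDerivAt
      have h1 : HasDerivAt (fun w : ℂ => w * (Real.log (‖f x‖) : ℂ) +
          Complex.I * (Complex.arg (f x) : ℂ)) ((Real.log (‖f x‖) : ℂ)) z := by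
        simpa using ((hasDerivAt_id z).mul_const
          ((Real.log (‖f x‖) : ℂ))).add_const
          (Complex.I * (Complex.arg (f x) : ℂ))
      have h2 := (h1.cexp).mul hHd
      refine h2.congr_deriv ?_
      ring
  have key := hasDerivAt_integral_of_dominated_loc_of_deriv_le (μ := volume)
    (F := fun z x => (if f x = 0 then (0:ℂ) else
        Complex.exp (z * Real.log (‖f x‖) +
          Complex.I * Complex.arg (f x))) * H z x)
    (F' := fun z x => (Real.log (‖f x‖) : ℂ) *
          ((if f x = 0 then (0:ℂ) else Complex.exp (z * Real.log (‖f x‖) +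
            Complex.I * Complex.arg (f x))) * H z x) +
        (if f x = 0 then (0:ℂ) else Complex.exp (z * Real.log (‖f x‖) +
            Complex.I * Complex.arg (f x))) * deriv (fun w => H w x) z)
    (bound := fun x => (if f x = 0 then 0 else
        max (‖f x‖ ^ a) (‖f x‖ ^ b) *
          (1 + |Real.log (‖f x‖)|)) * Hstar x)
    (Metric.ball_mem_nhds z₀ εpos)
    (Filter.Eventually.of_forall fun z => ((hφmeas z).mul (hHmeas z)).aestronglyMeasurable)
    hFint hF'meas.aestronglyMeasurable
    (Filter.Eventually.of_forall fun x => fun z hz => by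
      obtain ⟨hza, hzb⟩ := hball z hz
      simpa using hFbound z hza hzb x)
    hint
    (Filter.Eventually.of_forall hderiv)
  exact key.2.differentiableAt.differentiableWithinAt
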